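/- The torus 𝒯 parametrized by 𝔗(u,v) = ((R + r cos u) cos v, (R + r cos u) sin v, r sin u), with R > r > 0, has no characteristic points: at every point p = 𝔗(u,v), the tangent plane to 𝒯 at p does not equal span{X(p), Y(p)}. -/

import Mathlib

abbrev H : Type := ℝ × ℝ × ℝ

noncomputable def Xvec (p : H) : H := (1, 0, -p.2.1 / 2)
noncomputable def Yvec (p : H) : H := (0, 1, p.1 / 2)

/-- Parametrization of the torus of revolution with radii R > r > 0. -/
noncomputable def torusPar (R r : ℝ) (u v : ℝ) : H :=
  ((R + r * Real.cos u) * Real.cos v, (R + r * Real.cos u) * Real.sin v, r * Real.sin u)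

/-- Linear functional `a w₁ + b w₂ - w₃` on `H`. -/
noncomputable def phiLin (a b : ℝ) : H →ₗ[ℝ] ℝ where
  toFun w := a * w.1 + b * w.2.1 - w.2.2
  map_add' w z := by simp [Prod.fst_add, Prod.snd_add]; ring
  map_smul' c w := by simp [Prod.smul_fst, Prod.smul_snd, smul_eq_mul]; ring

/-- The torus 𝒯 has no characteristic points: at every point p = 𝔗(u,v), the tangent plane
span{𝔗_u, 𝔗_v} is different from the horizontal plane span{X(p), Y(p)}. -/
theorem torus_has_no_characteristic_points (R r : ℝ) (hr : 0 < r) (hRr : r < R) (u v : ℝ) :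
    Submodule.span ℝ {deriv (fun u' => torusPar R r u' v) u,
        deriv (fun v' => torusPar R r u v') v} ≠
      Submodule.span ℝ {Xvec (torusPar R r u v), Yvec (torusPar R r u v)} := by
  set ρ : ℝ := R + r * Real.cos u with hρdef
  have hρ : 0 < ρ := by
    have : -1 ≤ Real.cos u := Real.neg_one_le_cos u
    nlinarith
  -- the functional vanishing on the horizontal plane
  set p : H := torusPar R r u v with hp
  set φ : H →ₗ[ℝ] ℝ := phiLin (-(p.2.1) / 2) (p.1 / 2) with hφ
  -- derivative in v
  have hdv : HasDerivAt (fun v' => torusPar R r u v')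
      (ρ * (-Real.sin v), (ρ * Real.cos v, 0)) v := by
    have h1 : HasDerivAt (fun v' => ρ * Real.cos v') (ρ * (-Real.sin v)) v :=
      (Real.hasDerivAt_cos v).const_mul ρ
    have h2 : HasDerivAt (fun v' => ρ * Real.sin v') (ρ * Real.cos v) v :=
      (Real.hasDerivAt_sin v).const_mul ρ
    have h3 : HasDerivAt (fun _ : ℝ => r * Real.sin u) 0 v := hasDerivAt_const v _
    exact HasDerivAt.prodMk h1 (HasDerivAt.prodMk h2 h3)
  have hdv' : deriv (fun v' => torusPar R r u v') v
      = (ρ * (-Real.sin v), (ρ * Real.cos v, 0)) := hdv.deriv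
  intro h
  -- 𝔗_v is in the tangent span, hence (by h) in the horizontal span
  have hmem : deriv (fun v' => torusPar R r u v') v ∈
      Submodule.span ℝ {Xvec p, Yvec p} := by
    rw [← h]
    exact Submodule.subset_span (Set.mem_insert_of_mem _ rfl)
  -- φ vanishes on the horizontal span
  have hker : Submodule.span ℝ {Xvec p, Yvec p} ≤ LinearMap.ker φ := by
    rw [Submodule.span_le]
    rintro w (rfl | rfl) <;>
      simp [hφ, phiLin, Xvec, Yvec, LinearMap.mem_ker]
  have h0 : φ (deriv (fun v' => torusPar R r u v') v) = 0 :=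
    LinearMap.mem_ker.mp (hker hmem)
  rw [hdv'] at h0
  have hx : p.1 = ρ * Real.cos v := rfl
  have hy : p.2.1 = ρ * Real.sin v := rfl
  have hsc : Real.sin v ^ 2 + Real.cos v ^ 2 = 1 := Real.sin_sq_add_cos_sq v
  have : φ (ρ * (-Real.sin v), (ρ * Real.cos v, 0)) = ρ ^ 2 / 2 := by
    simp only [hφ, phiLin, LinearMap.coe_mk, AddHom.coe_mk, hx, hy]
    nlinarith [hsc]
  rw [this] at h0
  nlinarith
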